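/- arXiv:2605.25126 — 2 statements merged into one kernel-verified Lean document; each statement's English description precedes it below -/
import Mathlib

section
/- An integral lattice L ⊆ ℝⁿ (n ≥ 2, full rank) satisfies |{y ∈ L : ‖y‖² = 1}| = 2n if and only if L is isometric to ℤⁿ. -/
open scoped RealInnerProductSpace

private lemma pair_split {E : Type*} [AddCommGroup E] [DecidableEq E] :
    ∀ (k : ℕ) (F : Finset E), F.card = k → (∀ u ∈ F, u ≠ -u) →
      (∀ u ∈ F, -u ∈ F) →
      ∃ T : Finset E, T ⊆ F ∧ (∀ u ∈ T, -u ∉ T) ∧ F.card = 2 * T.card := by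
  intro k
  induction k using Nat.strong_induction_on with
  | _ k ih =>
    intro F hcard hne hneg
    rcases F.eq_empty_or_nonempty with rfl | ⟨u, hu⟩
    · exact ⟨∅, by simp⟩
    · have hnu : -u ∈ F := hneg u hu
      have hune : u ≠ -u := hne u hu
      set F' : Finset E := (F.erase u).erase (-u) with hF'
      have hmem' : ∀ v, v ∈ F' ↔ v ∈ F ∧ v ≠ u ∧ v ≠ -u := by
        intro v
        simp only [hF', Finset.mem_erase]
        tauto
      have hcard' : F'.card = k - 2 := by
        have h1 : -u ∈ F.erase u := Finset.mem_erase.2 ⟨fun h => hune h.symm, hnu⟩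
        rw [hF', Finset.card_erase_of_mem h1, Finset.card_erase_of_mem hu, hcard]; omega
      have hk2 : 2 ≤ k := by
        have : ({u, -u} : Finset E) ⊆ F := by
          intro v hv
          rcases Finset.mem_insert.1 hv with rfl | hv
          · exact hu
          · simpa using Finset.mem_singleton.1 hv ▸ hnu
        have := Finset.card_le_card this
        rwa [Finset.card_insert_of_notMem (by simpa using hune),
          Finset.card_singleton, hcard] at this
      obtain ⟨T', hT'sub, hT'neg, hT'card⟩ := ih (k - 2) (by omega) F' hcard'
        (fun v hv => hne v ((hmem' v).1 hv).1)
        (fun v hv => by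
          obtain ⟨hvF, hvu, hvnu⟩ := (hmem' v).1 hv
          refine (hmem' (-v)).2 ⟨hneg v hvF, ?_, ?_⟩
          · intro h; exact hvnu (by rw [← h, neg_neg])
          · intro h; exact hvu (by have := congrArg Neg.neg h; simpa using this))
      have huT' : u ∉ T' := fun h => ((hmem' u).1 (hT'sub h)).2.1 rfl
      have hnuT' : -u ∉ T' := fun h => ((hmem' (-u)).1 (hT'sub h)).2.2 rfl
      refine ⟨insert u T', ?_, ?_, ?_⟩
      · intro v hv
        rcases Finset.mem_insert.1 hv with rfl | hv
        · exact hu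
        · exact ((hmem' v).1 (hT'sub hv)).1
      · intro v hv
        rcases Finset.mem_insert.1 hv with rfl | hv
        · intro h
          rcases Finset.mem_insert.1 h with h | h
          · exact hune h.symm
          · exact hnuT' h
        · intro h
          rcases Finset.mem_insert.1 h with h | h
          · exact ((hmem' v).1 (hT'sub hv)).2.2 (by rw [← h, neg_neg])
          · exact hT'neg v hv h
      · rw [Finset.card_insert_of_notMem huT', hcard]
        rw [hcard'] at hT'card
        omega

private lemma normsq_eq (n : ℕ) (x : EuclideanSpace ℝ (Fin n)) :
    ‖x‖ ^ 2 = ∑ i, x i ^ 2 := by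
  rw [EuclideanSpace.norm_eq, Real.sq_sqrt (by positivity)]
  simp [sq_abs]

private lemma zcount (n : ℕ) :
    {x : EuclideanSpace ℝ (Fin n) | (∀ i, ∃ m : ℤ, x i = (m : ℝ)) ∧ ‖x‖ ^ 2 = 1}.ncard
      = 2 * n := by
  classical
  have hinj : Function.Injective
      (fun p : Fin n × Bool => EuclideanSpace.single p.1 (if p.2 then (1 : ℝ) else -1)) := by
    rintro ⟨i, b⟩ ⟨j, c⟩ hij
    have h1 := congrArg (· i) hij
    simp only [EuclideanSpace.single_apply, if_pos rfl] at h1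
    by_cases hij' : i = j
    · subst hij'
      rw [if_pos rfl] at h1
      cases b <;> cases c <;> first | rfl | (exfalso; norm_num at h1)
    · exfalso
      rw [if_neg hij'] at h1
      cases b <;> norm_num at h1
  have hset : {x : EuclideanSpace ℝ (Fin n) | (∀ i, ∃ m : ℤ, x i = (m : ℝ)) ∧ ‖x‖ ^ 2 = 1}
      = Set.range (fun p : Fin n × Bool =>
          EuclideanSpace.single p.1 (if p.2 then (1 : ℝ) else -1)) := by
    ext x
    constructor
    · rintro ⟨hcoord, hnorm⟩
      choose m hm using hcoord
      have hsum : (∑ i, m i ^ 2 : ℤ) = 1 := by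
        have hr : ∑ i, ((m i : ℝ)) ^ 2 = 1 := by
          calc ∑ i, ((m i : ℝ)) ^ 2 = ∑ i, x i ^ 2 :=
                Finset.sum_congr rfl fun i _ => by rw [hm i]
            _ = 1 := by rw [← normsq_eq]; exact hnorm
        exact_mod_cast (by push_cast; exact hr : ((∑ i, m i ^ 2 : ℤ) : ℝ) = 1)
      have hex : ∃ i, m i ≠ 0 := by
        by_contra hc
        push_neg at hc
        simp [hc] at hsum
      obtain ⟨i, hi⟩ := hex
      have hge : 1 ≤ m i ^ 2 := by
        have h1 := Int.one_le_abs hi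
        nlinarith [sq_abs (m i)]
      have hsplit : m i ^ 2 + ∑ j ∈ Finset.univ.erase i, m j ^ 2 = 1 := by
        simpa using (Finset.add_sum_erase Finset.univ (fun j => m j ^ 2)
          (Finset.mem_univ i)).trans hsum
      have hrestnn : (0 : ℤ) ≤ ∑ j ∈ Finset.univ.erase i, m j ^ 2 :=
        Finset.sum_nonneg fun j _ => sq_nonneg _
      have hsq : m i ^ 2 = 1 := le_antisymm (by linarith) hge
      have hrest : ∑ j ∈ Finset.univ.erase i, m j ^ 2 = 0 := by linarith
      have hzero : ∀ j, j ≠ i → m j = 0 := by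
        intro j hj
        have := (Finset.sum_eq_zero_iff_of_nonneg
          (fun j _ => sq_nonneg (m j))).1 hrest j (Finset.mem_erase.2 ⟨hj, Finset.mem_univ j⟩)
        exact pow_eq_zero_iff (n := 2) (by norm_num) |>.1 this
      have hmi : m i = 1 ∨ m i = -1 :=
        Int.isUnit_iff.1 (IsUnit.of_mul_eq_one (m i) (by rw [← pow_two]; exact hsq))
      refine ⟨⟨i, m i = 1⟩, ?_⟩
      ext j
      simp only [EuclideanSpace.single_apply]
      by_cases hji : j = i
      · subst hji
        rcases hmi with h' | h' <;> simp [h', hm j]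
      · simp [hji, hm j, hzero j hji]
    · rintro ⟨⟨i, b⟩, rfl⟩
      constructor
      · intro j
        simp only [EuclideanSpace.single_apply]
        by_cases hji : j = i
        · subst hji
          cases b
          · exact ⟨-1, by norm_num⟩
          · exact ⟨1, by norm_num⟩
        · exact ⟨0, by simp [hji]⟩
      · have := EuclideanSpace.norm_single (𝕜 := ℝ) i (if b then (1 : ℝ) else -1)
        simp only [Set.mem_setOf_eq]
        rw [this]
        cases b <;> norm_num
  rw [hset, ← Set.image_univ, Set.ncard_image_of_injective _ hinj, Set.ncard_univ]
  simp [Nat.card_eq_fintype_card, two_mul, mul_comm]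

private lemma norm_one_of_sq {E : Type*} [NormedAddCommGroup E] {u : E}
    (h : ‖u‖ ^ 2 = 1) : ‖u‖ = 1 := by
  have := Real.sqrt_sq (norm_nonneg u)
  rw [h] at this
  simpa using this.symm

theorem stmt5 (n : ℕ) (hn : 2 ≤ n)
    (L : AddSubgroup (EuclideanSpace ℝ (Fin n)))
    (hint : ∀ x ∈ L, ∀ y ∈ L, ∃ m : ℤ, ⟪x, y⟫ = (m : ℝ))
    (hfull : Submodule.span ℝ (L : Set (EuclideanSpace ℝ (Fin n))) = ⊤) :
    {y : EuclideanSpace ℝ (Fin n) | y ∈ L ∧ ‖y‖ ^ 2 = 1}.ncard = 2 * n ↔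
      ∃ f : EuclideanSpace ℝ (Fin n) ≃ₗᵢ[ℝ] EuclideanSpace ℝ (Fin n),
        f '' (L : Set (EuclideanSpace ℝ (Fin n)))
          = {x : EuclideanSpace ℝ (Fin n) | ∀ i, ∃ m : ℤ, x i = (m : ℝ)} := by
  classical
  set S : Set (EuclideanSpace ℝ (Fin n)) :=
    {y : EuclideanSpace ℝ (Fin n) | y ∈ L ∧ ‖y‖ ^ 2 = 1} with hSdef
  constructor
  · intro hS
    -- any two non-proportional unit vectors in L are orthogonal
    have horth : ∀ u ∈ S, ∀ v ∈ S, v ≠ u → v ≠ -u → ⟪u, v⟫ = 0 := by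
      rintro u ⟨huL, hu⟩ v ⟨hvL, hv⟩ hvu hvnu
      have hu1 : ‖u‖ = 1 := norm_one_of_sq hu
      have hv1 : ‖v‖ = 1 := norm_one_of_sq hv
      obtain ⟨m, hm⟩ := hint u huL v hvL
      have habs : |(m : ℝ)| ≤ 1 := by
        rw [← hm]
        have := abs_real_inner_le_norm u v
        rwa [hu1, hv1, one_mul] at this
      have habs' : |m| ≤ (1 : ℤ) := by exact_mod_cast habs
      obtain ⟨hml, hmr⟩ := abs_le.1 habs'
      interval_cases m
      · -- m = -1 : then v = -u
        exfalso
        apply hvnu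
        have h1 : ⟪u, -v⟫ = (1 : ℝ) := by
          rw [inner_neg_right, hm]; norm_num
        have h2 := (inner_eq_one_iff_of_norm_eq_one hu1 (by rwa [norm_neg])).1 h1
        have := congrArg Neg.neg h2
        simpa using this.symm
      · rw [hm]; norm_num
      · -- m = 1 : then v = u
        exfalso
        apply hvu
        exact ((inner_eq_one_iff_of_norm_eq_one hu1 hv1).1 (by rw [hm]; norm_num)).symm
    -- S is finite
    have hSfin : S.Finite := Set.finite_of_ncard_ne_zero (by rw [hS]; omega)
    set F : Finset (EuclideanSpace ℝ (Fin n)) := hSfin.toFinset with hFdef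
    have hFmem : ∀ u, u ∈ F ↔ u ∈ S := fun u => hSfin.mem_toFinset
    have hFcard : F.card = 2 * n := by
      rw [← Set.ncard_eq_toFinset_card S hSfin, hS]
    have hne0 : ∀ u ∈ S, u ≠ 0 := by
      rintro u ⟨-, hu⟩ rfl
      simp at hu
    obtain ⟨T, hTsub, hTneg, hTcard⟩ := pair_split F.card F rfl
      (by
        intro u huF h
        have hu0 := hne0 u ((hFmem u).1 huF)
        have h2 : (2 : ℝ) • u = 0 := by
          rw [two_smul]
          nth_rewrite 2 [h]
          simp
        rcases smul_eq_zero.1 h2 with h' | h'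
        · norm_num at h'
        · exact hu0 h')
      (by
        intro u huF
        obtain ⟨huL, hu⟩ := (hFmem u).1 huF
        exact (hFmem (-u)).2 ⟨neg_mem huL, by rwa [norm_neg]⟩)
    have hTn : T.card = n := by omega
    -- build orthonormal basis from T
    have e : T ≃ Fin n := Fintype.equivFinOfCardEq (by rw [Fintype.card_coe]; exact hTn)
    set b : Fin n → EuclideanSpace ℝ (Fin n) := fun i => ((e.symm i : T) : _) with hbdef
    have hbT : ∀ i, b i ∈ T := fun i => (e.symm i).2
    have hbS : ∀ i, b i ∈ S := fun i => (hFmem _).1 (hTsub (hbT i))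
    have hbinj : Function.Injective b := by
      intro i j hij
      have : e.symm i = e.symm j := Subtype.ext hij
      simpa using congrArg e this
    have hon : Orthonormal ℝ b := by
      rw [orthonormal_iff_ite]
      intro i j
      by_cases hij : i = j
      · subst hij
        rw [if_pos rfl, real_inner_self_eq_norm_sq, (hbS i).2]
      · rw [if_neg hij]
        refine horth (b i) (hbS i) (b j) (hbS j) (fun h => hij (hbinj h).symm) ?_
        intro h
        exact hTneg (b i) (hbT i) (h ▸ hbT j)
    haveI : Nonempty (Fin n) := ⟨⟨0, by omega⟩⟩
    have hspan : ⊤ ≤ Submodule.span ℝ (Set.range b) :=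
      ge_of_eq (hon.linearIndependent.span_eq_top_of_card_eq_finrank
        (by simp [finrank_euclideanSpace_fin]))
    set B : OrthonormalBasis (Fin n) ℝ (EuclideanSpace ℝ (Fin n)) :=
      OrthonormalBasis.mk hon hspan with hBdef
    have hBb : ∀ i, B i = b i := fun i => by
      rw [hBdef, OrthonormalBasis.coe_mk]
    refine ⟨B.repr, ?_⟩
    ext z
    simp only [Set.mem_image, Set.mem_setOf_eq]
    constructor
    · rintro ⟨x, hxL, rfl⟩
      intro i
      obtain ⟨m, hm⟩ := hint (b i) (hbS i).1 x hxL
      refine ⟨m, ?_⟩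
      rw [B.repr_apply_apply, hBb i]
      exact hm
    · intro hz
      choose m hm using hz
      refine ⟨∑ i, m i • b i, ?_, ?_⟩
      · exact AddSubgroup.sum_mem L fun i _ => AddSubgroup.zsmul_mem L (hbS i).1 (m i)
      · have hx : ∑ i, m i • b i = B.repr.symm z := by
          rw [← B.sum_repr_symm]
          refine Finset.sum_congr rfl fun i _ => ?_
          rw [hBb i, hm i, Int.cast_smul_eq_zsmul]
        rw [hx]
        exact B.repr.apply_symm_apply z
  · rintro ⟨f, hf⟩
    have hseteq : S = f.symm ''
        {x : EuclideanSpace ℝ (Fin n) | (∀ i, ∃ m : ℤ, x i = (m : ℝ)) ∧ ‖x‖ ^ 2 = 1} := by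
      ext y
      simp only [hSdef, Set.mem_setOf_eq, Set.mem_image]
      constructor
      · rintro ⟨hyL, hy⟩
        have hfy : f y ∈ ⇑f '' (L : Set (EuclideanSpace ℝ (Fin n))) := ⟨y, hyL, rfl⟩
        rw [hf] at hfy
        exact ⟨f y, ⟨hfy, by rw [f.norm_map]; exact hy⟩, by simp⟩
      · rintro ⟨x, ⟨hx1, hx2⟩, rfl⟩
        have hx : x ∈ f '' (L : Set (EuclideanSpace ℝ (Fin n))) := by rw [hf]; exact hx1
        obtain ⟨y, hyL, rfl⟩ := hx
        refine ⟨by simpa using hyL, ?_⟩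
        rw [LinearIsometryEquiv.norm_map]
        simpa using hx2
    rw [hseteq, Set.ncard_image_of_injective _ f.symm.injective]
    exact zcount n
end

section
/- No full-rank integral lattice L ⊆ ℝ² with k ≥ 2 has a norm-k shell of size 4k whose normalized shell is a set of 4k unit vectors with all power sums ∑ z^m vanishing for 1 ≤ m ≤ 4k−1 (viewing S¹ ⊂ ℂ): such a configuration would be a regular 4k-gon, whose adjacent inner product cos(π/(2k)) is not in (1/k)ℤ ∩ [−1,1]. -/
open scoped RealInnerProductSpace
open Polynomial Complex

lemma tot4 (k : ℕ) (hk : 2 ≤ k) : 4 ≤ Nat.totient (4 * k) := by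
  rw [Nat.totient_eq_card_coprime]
  have hcop : ∀ a, a = 1 ∨ a = 2*k-1 ∨ a = 2*k+1 ∨ a = 4*k-1 → Nat.Coprime (4*k) a := by
    rintro a (rfl | rfl | rfl | rfl)
    · exact Nat.coprime_one_right _
    · have key : ∀ d, d ∣ 4*k → d ∣ 2*k-1 → d = 1 := by
        intro d h4 h2
        have h2' : d ∣ 2*(2*k-1) := h2.mul_left 2
        have hd2 : d ∣ 2 := by
          have := Nat.dvd_sub h4 h2'
          have he : 4*k - 2*(2*k-1) = 2 := by omega
          rwa [he] at this
        rcases (Nat.dvd_prime Nat.prime_two).mp hd2 with rfl | rfl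
        · rfl
        · exfalso; obtain ⟨e, he⟩ := h2; omega
      exact key _ (Nat.gcd_dvd_left _ _) (Nat.gcd_dvd_right _ _)
    · have key : ∀ d, d ∣ 4*k → d ∣ 2*k+1 → d = 1 := by
        intro d h4 h2
        have h2' : d ∣ 2*(2*k+1) := h2.mul_left 2
        have hd2 : d ∣ 2 := by
          have := Nat.dvd_sub h2' h4
          have he : 2*(2*k+1) - 4*k = 2 := by omega
          rwa [he] at this
        rcases (Nat.dvd_prime Nat.prime_two).mp hd2 with rfl | rfl
        · rfl
        · exfalso; obtain ⟨e, he⟩ := h2; omega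
      exact key _ (Nat.gcd_dvd_left _ _) (Nat.gcd_dvd_right _ _)
    · have key : ∀ d, d ∣ 4*k → d ∣ 4*k-1 → d = 1 := by
        intro d h4 h2
        have := Nat.dvd_sub h4 h2
        have he : 4*k - (4*k-1) = 1 := by omega
        rwa [he, Nat.dvd_one] at this
      exact key _ (Nat.gcd_dvd_left _ _) (Nat.gcd_dvd_right _ _)
  have hsub : ({1, 2*k-1, 2*k+1, 4*k-1} : Finset ℕ) ⊆
      Finset.filter (fun a => (4*k).Coprime a) (Finset.range (4*k)) := by
    intro a ha
    simp only [Finset.mem_insert, Finset.mem_singleton] at ha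
    rw [Finset.mem_filter, Finset.mem_range]
    refine ⟨by omega, hcop a ha⟩
  have hcard : ({1, 2*k-1, 2*k+1, 4*k-1} : Finset ℕ).card = 4 := by
    rw [Finset.card_insert_of_notMem (by simp; omega),
        Finset.card_insert_of_notMem (by simp; omega),
        Finset.card_insert_of_notMem (by simp; omega), Finset.card_singleton]
  calc 4 = ({1, 2*k-1, 2*k+1, 4*k-1} : Finset ℕ).card := hcard.symm
    _ ≤ _ := Finset.card_le_card hsub

lemma aux2 (k : ℕ) (hk : 2 ≤ k) (m : ℤ)
    (h : (Complex.exp (2 * Real.pi * Complex.I / (4*k : ℕ))).re = (m : ℝ) / k) : False := by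
  have hn0 : (4*k : ℕ) ≠ 0 := by omega
  have hprim : IsPrimitiveRoot (Complex.exp (2 * Real.pi * Complex.I / (4*k : ℕ))) (4*k) :=
    Complex.isPrimitiveRoot_exp _ hn0
  have harg : 2 * (Real.pi : ℂ) * Complex.I / ((4*k : ℕ) : ℂ)
      = ((2 * Real.pi / (4*k : ℕ) : ℝ) : ℂ) * Complex.I := by
    push_cast
    ring
  set ζ : ℂ := Complex.exp (2 * Real.pi * Complex.I / (4*k : ℕ)) with hζdef
  have hζ0 : ζ ≠ 0 := Complex.exp_ne_zero _
  have habs : ‖ζ‖ = 1 := by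
    rw [hζdef, harg, Complex.norm_exp_ofReal_mul_I]
  have hconj : (starRingEnd ℂ) ζ = ζ⁻¹ := (Complex.inv_eq_conj habs).symm
  have hsum : ζ + ζ⁻¹ = ((2 * (m : ℝ) / k : ℝ) : ℂ) := by
    rw [← hconj, Complex.add_conj, h]
    simp [Complex.ofReal_mul, Complex.ofReal_div]
    ring
  set q : ℚ := 2 * (m : ℚ) / (k : ℚ) with hq
  have hqc : ((q : ℚ) : ℂ) = ((2 * (m : ℝ) / k : ℝ) : ℂ) := by
    simp [hq, Complex.ofReal_mul, Complex.ofReal_div, Complex.ofReal_inv]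
  set P : Polynomial ℚ := X^2 - C q * X + 1 with hP
  have hP0 : P ≠ 0 := by
    intro hcon
    have := congrArg (fun p => Polynomial.coeff p 2) hcon
    simp [hP, Polynomial.coeff_one] at this
  have hPdeg : P.degree ≤ 2 := by
    rw [hP]
    compute_degree
  have hPev : Polynomial.aeval ζ P = 0 := by
    rw [hP]
    have h3 : ζ * ζ⁻¹ = 1 := mul_inv_cancel₀ hζ0
    have h2 : ζ + ζ⁻¹ = ((q:ℚ):ℂ) := by rw [hqc]; exact hsum
    simp only [map_add, map_sub, map_mul, map_pow, aeval_X, aeval_C, map_one,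
      eq_ratCast]
    linear_combination ζ * h2 - h3
  have hdegle := minpoly.degree_le_of_ne_zero ℚ ζ hP0 hPev
  rw [← Polynomial.cyclotomic_eq_minpoly_rat hprim (by omega), Polynomial.degree_cyclotomic] at hdegle
  have htot : (4*k).totient ≤ 2 := by
    have h2 := hdegle.trans hPdeg
    exact_mod_cast h2
  have := tot4 k hk
  omega

theorem stmt13 (k : ℕ) (hk : 2 ≤ k)
    (L : AddSubgroup (EuclideanSpace ℝ (Fin 2)))
    (hint : ∀ x ∈ L, ∀ y ∈ L, ∃ m : ℤ, ⟪x, y⟫ = (m : ℝ))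
    (hfull : Submodule.span ℝ (L : Set (EuclideanSpace ℝ (Fin 2))) = ⊤)
    (z : Fin (4 * k) → ℂ) (hinj : Function.Injective z)
    (hzmem : ∀ i, ∃ y ∈ L, ‖y‖ ^ 2 = (k : ℝ) ∧
        z i = ((y 0 : ℝ) + (y 1 : ℝ) * Complex.I) / (Real.sqrt k : ℂ))
    (hzsurj : ∀ y ∈ L, ‖y‖ ^ 2 = (k : ℝ) →
        ∃ i, z i = ((y 0 : ℝ) + (y 1 : ℝ) * Complex.I) / (Real.sqrt k : ℂ)) :
    ¬ (∀ m : ℕ, 1 ≤ m → m ≤ 4 * k - 1 → ∑ i, z i ^ m = 0) := by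
  intro hps
  have hn0 : 4 * k ≠ 0 := by omega
  have hnpos : 0 < 4 * k := by omega
  have hkR : (0:ℝ) < (k:ℝ) := by exact_mod_cast (by omega : 0 < k)
  have hsk : (0:ℝ) < Real.sqrt k := Real.sqrt_pos.mpr hkR
  have hskC : ((Real.sqrt k : ℝ) : ℂ) ≠ 0 := by exact_mod_cast hsk.ne'
  -- each z i has modulus 1
  have habs : ∀ i, ‖z i‖ = 1 := by
    intro i
    obtain ⟨y, hyL, hyn, hz⟩ := hzmem i
    have hsum2 : (y 0)^2 + (y 1)^2 = (k:ℝ) := by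
      rw [EuclideanSpace.norm_eq, Real.sq_sqrt (by positivity)] at hyn
      simpa [Fin.sum_univ_two, sq_abs] using hyn
    rw [hz, norm_div]
    have h1 : ‖((y 0 : ℝ) + (y 1 : ℝ) * Complex.I : ℂ)‖ = Real.sqrt k := by
      rw [Complex.norm_def, Complex.normSq_add_mul_I, hsum2]
    have h2 : ‖((Real.sqrt k : ℝ) : ℂ)‖ = Real.sqrt k := by
      rw [Complex.norm_real, Real.norm_eq_abs, abs_of_pos hsk]
    rw [h1, h2, div_self hsk.ne']
  have znz : ∀ i, z i ≠ 0 := by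
    intro i h
    have := habs i
    rw [h] at this
    simp at this
  -- power sums vanish for all exponents ℓ with 0 < |ℓ| ≤ 4k-1
  have hS : ∀ ℓ : ℤ, ℓ ≠ 0 → ℓ.natAbs ≤ 4*k-1 → ∑ i, z i ^ ℓ = 0 := by
    intro ℓ hl0 hlle
    obtain ⟨a, rfl | rfl⟩ := Int.eq_nat_or_neg ℓ
    · have ha1 : 1 ≤ a := by omega
      have ha2 : a ≤ 4*k-1 := by simpa using hlle
      have := hps a ha1 ha2
      simpa [zpow_natCast] using this
    · have ha1 : 1 ≤ a := by omega
      have ha2 : a ≤ 4*k-1 := by simpa using hlle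
      have hconj : ∀ i, (z i ^ a)⁻¹ = (starRingEnd ℂ) (z i ^ a) := by
        intro i
        exact Complex.inv_eq_conj (by rw [norm_pow, habs i, one_pow])
      calc ∑ i, (z i)^(-(a:ℤ))
          = ∑ i, (starRingEnd ℂ) (z i ^ a) := by
            simp only [zpow_neg, zpow_natCast]
            exact Finset.sum_congr rfl (fun i _ => hconj i)
        _ = (starRingEnd ℂ) (∑ i, z i ^ a) := (map_sum _ _ _).symm
        _ = 0 := by rw [hps a ha1 ha2, map_zero]
  -- the polynomial with roots z i
  set p : Polynomial ℂ := ∏ i : Fin (4*k), (Polynomial.X - Polynomial.C (z i)) with hpdef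
  have hmonic : ∀ i ∈ Finset.univ, (Polynomial.X - Polynomial.C (z i)).Monic :=
    fun i _ => Polynomial.monic_X_sub_C (z i)
  have hdeg : p.natDegree = 4*k := by
    rw [hpdef, Polynomial.natDegree_prod_of_monic _ _ hmonic]
    simp [Polynomial.natDegree_X_sub_C]
  have heval : ∀ i, p.eval (z i) = 0 := by
    intro i
    rw [hpdef, Polynomial.eval_prod]
    exact Finset.prod_eq_zero (Finset.mem_univ i) (by simp)
  have hevalsum : ∀ x : ℂ, p.eval x = ∑ j ∈ Finset.range (4*k+1), p.coeff j * x ^ j := by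
    intro x; rw [Polynomial.eval_eq_sum_range, hdeg]
  have hS0 : ∑ _i : Fin (4*k), (1:ℂ) = ((4*k : ℕ) : ℂ) := by simp
  -- middle coefficients vanish
  have hcoeff : ∀ a : ℕ, 1 ≤ a → a ≤ 4*k-1 → p.coeff a = 0 := by
    intro a ha1 ha2
    have h1 : ∑ i, (z i)^(-(a:ℤ)) * p.eval (z i) = 0 := by simp [heval]
    have h2 : ∀ i : Fin (4*k), (z i)^(-(a:ℤ)) * p.eval (z i)
        = ∑ j ∈ Finset.range (4*k+1), p.coeff j * (z i)^((j:ℤ) - a) := by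
      intro i
      rw [hevalsum, Finset.mul_sum]
      refine Finset.sum_congr rfl fun j hj => ?_
      rw [sub_eq_add_neg, zpow_add₀ (znz i), zpow_natCast]
      ring
    rw [Finset.sum_congr rfl (fun i _ => h2 i), Finset.sum_comm] at h1
    have h3 : ∀ j ∈ Finset.range (4*k+1),
        (∑ i, p.coeff j * (z i)^((j:ℤ) - a))
          = if j = a then p.coeff a * ((4*k:ℕ):ℂ) else 0 := by
      intro j hj
      have hj' : j < 4*k+1 := Finset.mem_range.mp hj
      rw [← Finset.mul_sum]
      by_cases hja : j = a
      · subst hja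
        rw [if_pos rfl, sub_self]
        simp only [zpow_zero]
        rw [hS0]
      · rw [if_neg hja, hS ((j:ℤ) - a) (by omega) (by omega), mul_zero]
    rw [Finset.sum_congr rfl h3, Finset.sum_ite_eq' (Finset.range (4*k+1)) a] at h1
    rw [if_pos (Finset.mem_range.mpr (by omega))] at h1
    have hN : ((4*k:ℕ):ℂ) ≠ 0 := Nat.cast_ne_zero.mpr hn0
    exact (mul_eq_zero.mp h1).resolve_right hN
  -- all z i are 4k-th roots of c
  have hctop : p.coeff (4*k) = 1 := by
    have h := (Polynomial.monic_prod_of_monic _ _ hmonic).coeff_natDegree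
    rw [← hpdef] at h
    rwa [hdeg] at h
  have hpow : ∀ i, z i ^ (4*k) = - p.coeff 0 := by
    intro i
    have h1 := heval i
    rw [hevalsum, Finset.sum_range_succ'] at h1
    have h2 : ∀ j ∈ Finset.range (4*k), p.coeff (j+1) * z i ^ (j+1)
        = if j = 4*k-1 then z i ^ (4*k) else 0 := by
      intro j hj
      have hj' : j < 4*k := Finset.mem_range.mp hj
      by_cases hj4 : j = 4*k-1
      · subst hj4
        rw [if_pos rfl, show (4*k-1)+1 = 4*k by omega, hctop, one_mul]
      · rw [if_neg hj4, hcoeff (j+1) (by omega) (by omega), zero_mul]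
    rw [Finset.sum_congr rfl h2, Finset.sum_ite_eq' (Finset.range (4*k)) (4*k-1)] at h1
    rw [if_pos (Finset.mem_range.mpr (by omega))] at h1
    simp only [pow_zero, mul_one] at h1
    linear_combination h1
  set i₀ : Fin (4*k) := ⟨0, hnpos⟩ with hi₀
  have hc0 : (- p.coeff 0) ≠ 0 := by
    rw [← hpow i₀]; exact pow_ne_zero _ (znz i₀)
  have hprim : IsPrimitiveRoot (Complex.exp (2 * Real.pi * Complex.I / ((4*k : ℕ) : ℂ))) (4*k) :=
    Complex.isPrimitiveRoot_exp _ hn0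
  set ζ : ℂ := Complex.exp (2 * Real.pi * Complex.I / ((4*k : ℕ) : ℂ)) with hζdef
  have hζn : ζ ^ (4*k) = 1 := hprim.pow_eq_one
  -- the z i / z i₀ are exactly the 4k-th roots of unity
  have himg : Finset.image (fun i => z i / z i₀) Finset.univ
      = Polynomial.nthRootsFinset (4*k) (1 : ℂ) := by
    apply Finset.eq_of_subset_of_card_le
    · intro w hw
      obtain ⟨i, -, rfl⟩ := Finset.mem_image.mp hw
      rw [Polynomial.mem_nthRootsFinset hnpos (1 : ℂ), div_pow, hpow i, hpow i₀, div_self hc0]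
    · rw [hprim.card_nthRootsFinset, Finset.card_image_of_injective _ ?_,
        Finset.card_univ, Fintype.card_fin]
      intro a b hab
      simp only at hab
      rw [div_eq_div_iff (znz i₀) (znz i₀)] at hab
      exact hinj (mul_right_cancel₀ (znz i₀) hab)
  have hζmem : ζ ∈ Finset.image (fun i => z i / z i₀) Finset.univ := by
    rw [himg]; exact (Polynomial.mem_nthRootsFinset hnpos (1 : ℂ)).mpr hζn
  obtain ⟨i₁, -, hi₁⟩ := Finset.mem_image.mp hζmem
  have hz10 : z i₁ = ζ * z i₀ := by
    rw [← hi₁, div_mul_cancel₀ _ (znz i₀)]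
  -- geometry: the inner product of the two lattice points
  obtain ⟨y1, hy1L, hy1n, hz1⟩ := hzmem i₁
  obtain ⟨y0, hy0L, hy0n, hz0⟩ := hzmem i₀
  obtain ⟨m, hm⟩ := hint y1 hy1L y0 hy0L
  have hw : ∀ (yy : EuclideanSpace ℝ (Fin 2)) (i : Fin (4*k)),
      z i = ((yy 0 : ℝ) + (yy 1 : ℝ) * Complex.I) / (Real.sqrt k : ℂ) →
      ((yy 0 : ℝ) : ℂ) + (yy 1 : ℝ) * Complex.I = (Real.sqrt k : ℂ) * z i := by
    intro yy i h
    rw [h]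
    field_simp
  have hw1 := hw y1 i₁ hz1
  have hw0 := hw y0 i₀ hz0
  have hre1 : y1 0 = ((Real.sqrt k : ℂ) * z i₁).re := by rw [← hw1]; simp
  have him1 : y1 1 = ((Real.sqrt k : ℂ) * z i₁).im := by rw [← hw1]; simp
  have hre0 : y0 0 = ((Real.sqrt k : ℂ) * z i₀).re := by rw [← hw0]; simp
  have him0 : y0 1 = ((Real.sqrt k : ℂ) * z i₀).im := by rw [← hw0]; simp
  have hip : ⟪y1, y0⟫ = (k:ℝ) * ζ.re := by
    have h1 : ⟪y1, y0⟫ = y1 0 * y0 0 + y1 1 * y0 1 := by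
      simp [PiLp.inner_apply, RCLike.inner_apply, Fin.sum_univ_two, mul_comm]
    have hkk : ((Real.sqrt k : ℝ) : ℂ) * ((Real.sqrt k : ℝ) : ℂ) = ((k:ℝ) : ℂ) := by
      rw [← Complex.ofReal_mul, Real.mul_self_sqrt hkR.le]
    have hthis : z i₀ * (starRingEnd ℂ) (z i₀) = 1 := by
      rw [Complex.mul_conj, Complex.normSq_eq_norm_sq, habs i₀]
      simp
    have h2 : ((Real.sqrt k : ℂ) * z i₁) * (starRingEnd ℂ) ((Real.sqrt k : ℂ) * z i₀)
        = ((k:ℝ) : ℂ) * ζ := by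
      rw [hz10, map_mul, Complex.conj_ofReal]
      calc (Real.sqrt k : ℂ) * (ζ * z i₀) * ((Real.sqrt k : ℂ) * (starRingEnd ℂ) (z i₀))
          = ((Real.sqrt k : ℂ) * (Real.sqrt k : ℂ)) * ζ * (z i₀ * (starRingEnd ℂ) (z i₀)) := by
            ring
        _ = ((k:ℝ) : ℂ) * ζ := by rw [hkk, hthis, mul_one]
    have h3 : (((Real.sqrt k : ℂ) * z i₁) * (starRingEnd ℂ) ((Real.sqrt k : ℂ) * z i₀)).re
        = y1 0 * y0 0 + y1 1 * y0 1 := by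
      rw [Complex.mul_re, Complex.conj_re, Complex.conj_im, ← hre1, ← him1, ← hre0, ← him0]
      ring
    rw [h1, ← h3, h2]
    simp
  rw [hm] at hip
  have hre : ζ.re = (m:ℝ)/(k:ℝ) := by
    rw [eq_div_iff hkR.ne']
    linarith [hip]
  exact aux2 k hk m hre
end
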